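/- Let H be a Hilbert space and L, L₀ : H → H* bounded self-dual operators with ‖L − L₀‖ small, where L₀ has trivial kernel and finite negative Morse index n⁻(L₀), and both operators decompose H = X₋ ⊕ ker ⊕ X₊ with L negative definite on X₋ and uniformly positive on X₊. Then n⁻(L) = n⁻(L₀) for ‖L − L₀‖ sufficiently small. -/

import Mathlib

open RealInnerProductSpace

variable {H : Type*} [NormedAddCommGroup H] [InnerProductSpace ℝ H]

/-- The set of dimensions of subspaces of `W` on which the quadratic form of `L` is
negative definite. -/
def negSet (L : H →L[ℝ] H) (W : Submodule ℝ H) : Set ℕ :=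
  {n : ℕ | ∃ V : Submodule ℝ H, V ≤ W ∧ (∀ u ∈ V, u ≠ 0 → ⟪L u, u⟫ < (0:ℝ)) ∧
    Module.finrank ℝ V = n}

/-- Negative Morse index of `L` restricted to `W`. -/
noncomputable def negIdxOn (L : H →L[ℝ] H) (W : Submodule ℝ H) : ℕ :=
  sSup (negSet L W)

/-- Property (G3): H decomposes as X₋ ⊕ ker L ⊕ X₊ with dim X₋ < ∞, L negative definite
on X₋ and uniformly positive on X₊. -/
def propG3 (L : H →L[ℝ] H) : Prop :=
  ∃ Xm Xp : Submodule ℝ H, ∃ δ : ℝ, 0 < δ ∧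
    FiniteDimensional ℝ Xm ∧
    (∀ u ∈ Xm, u ≠ 0 → ⟪L u, u⟫ < (0:ℝ)) ∧
    (∀ u ∈ Xp, δ * ‖u‖ ^ 2 ≤ ⟪L u, u⟫) ∧
    Xm ⊔ (LinearMap.ker (L : H →ₗ[ℝ] H) ⊔ Xp) = ⊤ ∧
    (∀ u ∈ Xm, ∀ v ∈ LinearMap.ker (L : H →ₗ[ℝ] H), ∀ x ∈ Xp,
      u + v + x = 0 → u = 0 ∧ v = 0 ∧ x = 0)

/-- The quadratic form of a symmetric `L` is nonnegative on `ker L ⊔ Xp` if it is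
`δ`-positive on `Xp`. -/
lemma aux_nonneg (L : H →L[ℝ] H) (hsym : ∀ u v, ⟪L u, v⟫ = ⟪u, L v⟫)
    {Xp : Submodule ℝ H} {δ : ℝ} (hδ : 0 < δ)
    (hpos : ∀ u ∈ Xp, δ * ‖u‖ ^ 2 ≤ ⟪L u, u⟫) :
    ∀ v ∈ (LinearMap.ker (L : H →ₗ[ℝ] H) ⊔ Xp : Submodule ℝ H), (0:ℝ) ≤ ⟪L v, v⟫ := by
  intro v hv
  obtain ⟨k, hk, x, hx, rfl⟩ := Submodule.mem_sup.1 hv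
  have hk0 : L k = 0 := hk
  have h1 : L (k + x) = L x := by rw [map_add, hk0, zero_add]
  have h2 : ⟪L x, k⟫ = 0 := by rw [hsym, hk0, inner_zero_right]
  have h3 : ⟪L (k + x), k + x⟫ = ⟪L x, x⟫ := by
    rw [h1, inner_add_right, h2, zero_add]
  rw [h3]
  have := hpos x hx
  nlinarith [sq_nonneg ‖x‖]

/-- Dimension comparison: if `V` meets `W` trivially and `M ⊔ W = ⊤` with `M`
finite-dimensional, then `finrank V ≤ finrank M`. -/
lemma aux_dim_le (M W V : Submodule ℝ H) [FiniteDimensional ℝ M]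
    (hdisj : ∀ v ∈ V, v ∈ W → v = 0) (hsup : M ⊔ W = ⊤) :
    Module.finrank ℝ V ≤ Module.finrank ℝ M := by
  have hsurj : Function.Surjective (W.mkQ.comp M.subtype) := by
    rw [← LinearMap.range_eq_top, LinearMap.range_comp, Submodule.range_subtype]
    have hW : Submodule.map W.mkQ W = ⊥ := W.mkQ_map_self
    have h : Submodule.map W.mkQ (M ⊔ W) = ⊤ := by
      rw [hsup, Submodule.map_top, Submodule.range_mkQ]
    rwa [Submodule.map_sup, hW, sup_bot_eq] at h
  haveI : Module.Finite ℝ (H ⧸ W) := Module.Finite.of_surjective _ hsurj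
  have hinj : Function.Injective (W.mkQ.comp V.subtype) := by
    intro a b hab
    have hW : ((a : H) - b) ∈ W := by
      rw [← Submodule.Quotient.eq]
      exact hab
    have hV : ((a : H) - b) ∈ V := sub_mem a.2 b.2
    have := hdisj _ hV hW
    exact Subtype.ext (sub_eq_zero.1 this)
  have h1 : Module.finrank ℝ V ≤ Module.finrank ℝ (H ⧸ W) :=
    LinearMap.finrank_le_finrank_of_injective hinj
  have h2 : Module.finrank ℝ (H ⧸ W) ≤ Module.finrank ℝ M := by
    have h := (W.mkQ.comp M.subtype).finrank_range_le
    rwa [LinearMap.range_eq_top.2 hsurj, finrank_top] at h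
  exact h1.trans h2

/-- The negative index of `L` equals `finrank Xm` when `L` is negative definite on `Xm`,
nonnegative on `W`, and `Xm ⊔ W = ⊤`. -/
lemma aux_negIdx (L : H →L[ℝ] H) (Xm W : Submodule ℝ H) [FiniteDimensional ℝ Xm]
    (hneg : ∀ u ∈ Xm, u ≠ 0 → ⟪L u, u⟫ < (0:ℝ))
    (hWnn : ∀ v ∈ W, (0:ℝ) ≤ ⟪L v, v⟫)
    (hsup : Xm ⊔ W = ⊤) :
    negIdxOn L ⊤ = Module.finrank ℝ Xm := by
  have hmem : Module.finrank ℝ Xm ∈ negSet L ⊤ := ⟨Xm, le_top, hneg, rfl⟩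
  have hbd : ∀ n ∈ negSet L ⊤, n ≤ Module.finrank ℝ Xm := by
    rintro n ⟨V, -, hV, rfl⟩
    refine aux_dim_le Xm W V (fun v hv hw => ?_) hsup
    by_contra h0
    exact absurd (hWnn v hw) (not_le.2 (hV v hv h0))
  exact le_antisymm (csSup_le ⟨_, hmem⟩ hbd) (le_csSup ⟨_, hbd⟩ hmem)

/-- Uniform negativity on a finite-dimensional subspace, by compactness of its sphere. -/
lemma aux_unif (L₀ : H →L[ℝ] H) (Xm : Submodule ℝ H) [FiniteDimensional ℝ Xm]
    (hneg : ∀ u ∈ Xm, u ≠ 0 → ⟪L₀ u, u⟫ < (0:ℝ)) :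
    ∃ c > (0:ℝ), ∀ u ∈ Xm, ⟪L₀ u, u⟫ ≤ -c * ‖u‖ ^ 2 := by
  by_cases hbot : Xm = ⊥
  · refine ⟨1, one_pos, fun u hu => ?_⟩
    rw [hbot, Submodule.mem_bot] at hu
    subst hu; simp
  · obtain ⟨x, hx, hx0⟩ := Submodule.exists_mem_ne_zero_of_ne_bot hbot
    set f : Xm → ℝ := fun u => ⟪L₀ (u : H), (u : H)⟫ with hf
    have hfc : Continuous f :=
      Continuous.inner (L₀.continuous.comp continuous_subtype_val) continuous_subtype_val
    have hS : IsCompact (Metric.sphere (0 : Xm) 1) := isCompact_sphere _ _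
    have hSne : (Metric.sphere (0 : Xm) 1).Nonempty := by
      refine ⟨⟨‖x‖⁻¹ • x, Submodule.smul_mem _ _ hx⟩, ?_⟩
      rw [Metric.mem_sphere, dist_zero_right]
      show ‖‖x‖⁻¹ • x‖ = 1
      exact norm_smul_inv_norm hx0
    obtain ⟨u₀, hu₀S, hmax⟩ := hS.exists_isMaxOn hSne hfc.continuousOn
    have hu₀norm : ‖(u₀ : H)‖ = 1 := by
      have := hu₀S
      rw [Metric.mem_sphere, dist_zero_right] at this
      exact this
    have hu₀0 : (u₀ : H) ≠ 0 := by
      intro h; rw [h, norm_zero] at hu₀norm; norm_num at hu₀norm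
    have hc : 0 < -f u₀ := by
      have := hneg u₀ u₀.2 hu₀0
      simp only [hf] at *
      linarith
    refine ⟨-f u₀, hc, fun u hu => ?_⟩
    rcases eq_or_ne u 0 with rfl | hu0
    · simp
    · have hn : (0:ℝ) < ‖u‖ := norm_pos_iff.2 hu0
      set w : Xm := ⟨‖u‖⁻¹ • u, Submodule.smul_mem _ _ hu⟩ with hw
      have hwS : w ∈ Metric.sphere (0 : Xm) 1 := by
        rw [Metric.mem_sphere, dist_zero_right]
        show ‖‖u‖⁻¹ • u‖ = 1
        exact norm_smul_inv_norm hu0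
      have hle : f w ≤ f u₀ := hmax hwS
      have hfw : f w = ‖u‖⁻¹ ^ 2 * ⟪L₀ u, u⟫ := by
        simp only [hf, hw, map_smul, real_inner_smul_left, real_inner_smul_right]
        ring
      have h2 : ⟪L₀ u, u⟫ = ‖u‖ ^ 2 * f w := by
        rw [hfw]
        field_simp
      rw [h2]
      nlinarith [sq_nonneg ‖u‖, hle]

/-- Stability of the negative Morse index under small self-dual perturbations of a
nondegenerate operator satisfying (G3). -/
theorem stmt_8 [CompleteSpace H] (L₀ : H →L[ℝ] H)
    (hsym₀ : ∀ u v, ⟪L₀ u, v⟫ = ⟪u, L₀ v⟫)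
    (hG3₀ : propG3 L₀)
    (hker₀ : LinearMap.ker (L₀ : H →ₗ[ℝ] H) = ⊥) :
    ∃ ε > 0, ∀ L : H →L[ℝ] H,
      (∀ u v, ⟪L u, v⟫ = ⟪u, L v⟫) → propG3 L → ‖L - L₀‖ < ε →
      negIdxOn L ⊤ = negIdxOn L₀ ⊤ := by
  obtain ⟨Xm, Xp, δ, hδ, hfin, hneg, hpos, hsup, -⟩ := hG3₀
  haveI := hfin
  obtain ⟨c, hc, hcneg⟩ := aux_unif L₀ Xm hneg
  refine ⟨min c δ, lt_min hc hδ, fun L hsym hG3 hlt => ?_⟩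
  obtain ⟨Xm', Xp', δ', hδ', hfin', hneg', hpos', hsup', -⟩ := hG3
  haveI := hfin'
  have hsupXm : Xm ⊔ Xp = ⊤ := by rwa [hker₀, bot_sup_eq] at hsup
  have hpert : ∀ u : H, |⟪L u, u⟫ - ⟪L₀ u, u⟫| ≤ ‖L - L₀‖ * ‖u‖ ^ 2 := by
    intro u
    have h1 : ⟪L u, u⟫ - ⟪L₀ u, u⟫ = ⟪(L - L₀) u, u⟫ := by
      simp [inner_sub_left]
    rw [h1]
    calc |⟪(L - L₀) u, u⟫| ≤ ‖(L - L₀) u‖ * ‖u‖ := abs_real_inner_le_norm _ _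
      _ ≤ (‖L - L₀‖ * ‖u‖) * ‖u‖ :=
          mul_le_mul_of_nonneg_right ((L - L₀).le_opNorm u) (norm_nonneg u)
      _ = ‖L - L₀‖ * ‖u‖ ^ 2 := by ring
  have hεc : ‖L - L₀‖ < c := lt_of_lt_of_le hlt (min_le_left _ _)
  have hεδ : ‖L - L₀‖ < δ := lt_of_lt_of_le hlt (min_le_right _ _)
  have hLnegXm : ∀ u ∈ Xm, u ≠ 0 → ⟪L u, u⟫ < (0:ℝ) := by
    intro u hu hu0
    have h1 := hcneg u hu
    have h2 := abs_le.1 (hpert u)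
    have h3 : (0:ℝ) < ‖u‖ ^ 2 := pow_pos (norm_pos_iff.2 hu0) 2
    nlinarith [h2.1, h2.2]
  have hLposXp : ∀ v ∈ Xp, v ≠ 0 → (0:ℝ) < ⟪L v, v⟫ := by
    intro v hv hv0
    have h1 := hpos v hv
    have h2 := abs_le.1 (hpert v)
    have h3 : (0:ℝ) < ‖v‖ ^ 2 := pow_pos (norm_pos_iff.2 hv0) 2
    nlinarith [h2.1, h2.2]
  have e1 : negIdxOn L ⊤ = Module.finrank ℝ Xm' :=
    aux_negIdx L Xm' (LinearMap.ker (L : H →ₗ[ℝ] H) ⊔ Xp') hneg' (aux_nonneg L hsym hδ' hpos') hsup'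
  have e0 : negIdxOn L₀ ⊤ = Module.finrank ℝ Xm :=
    aux_negIdx L₀ Xm (LinearMap.ker (L₀ : H →ₗ[ℝ] H) ⊔ Xp) hneg (aux_nonneg L₀ hsym₀ hδ hpos) hsup
  have le1 : Module.finrank ℝ Xm' ≤ Module.finrank ℝ Xm := by
    refine aux_dim_le Xm Xp Xm' (fun v hv hw => ?_) hsupXm
    by_contra h0
    exact absurd (hLposXp v hw h0) (not_lt.2 (le_of_lt (hneg' v hv h0)))
  have le2 : Module.finrank ℝ Xm ≤ Module.finrank ℝ Xm' := by
    refine aux_dim_le Xm' (LinearMap.ker (L : H →ₗ[ℝ] H) ⊔ Xp') Xm (fun v hv hw => ?_) hsup'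
    by_contra h0
    exact absurd (aux_nonneg L hsym hδ' hpos' v hw) (not_le.2 (hLnegXm v hv h0))
  rw [e1, e0]
  omega
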